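/- The Briançon polynomial f = 3y·p³ + 3p²·s − 5p·s − s, where s = xy + 1 and p = x·s + 1, viewed as a polynomial in ℂ[x,y], has no critical points: the system ∂f/∂x = ∂f/∂y = 0 has no solution in ℂ². -/
import Mathlib


open MvPolynomial

set_option maxHeartbeats 2000000
set_option maxRecDepth 4000

open MvPolynomial

private lemma pderiv_three (i : Fin 2) : pderiv i (3 : MvPolynomial (Fin 2) ℂ) = 0 := by
  rw [show (3 : MvPolynomial (Fin 2) ℂ) = ((3:ℕ):MvPolynomial (Fin 2) ℂ) by norm_cast]
  exact Derivation.map_natCast _ 3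

private lemma pderiv_five (i : Fin 2) : pderiv i (5 : MvPolynomial (Fin 2) ℂ) = 0 := by
  rw [show (5 : MvPolynomial (Fin 2) ℂ) = ((5:ℕ):MvPolynomial (Fin 2) ℂ) by norm_cast]
  exact Derivation.map_natCast _ 5

/-- The Briançon polynomial `f = 3y·p³ + 3p²·s − 5p·s − s`, where `s = xy + 1`
and `p = x·s + 1`, has no critical points in `ℂ²`. -/
theorem briancon_no_critical_points :
    ¬ ∃ v : Fin 2 → ℂ,
      (∀ i : Fin 2,
        eval v (pderiv i
          (3 * X 1 * (X 0 * (X 0 * X 1 + 1) + 1) ^ 3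
            + 3 * (X 0 * (X 0 * X 1 + 1) + 1) ^ 2 * (X 0 * X 1 + 1)
            - 5 * (X 0 * (X 0 * X 1 + 1) + 1) * (X 0 * X 1 + 1)
            - (X 0 * X 1 + 1) : MvPolynomial (Fin 2) ℂ)) = 0) := by
  rintro ⟨v, h⟩
  have e0 : pderiv (0:Fin 2)
      (3 * X 1 * (X 0 * (X 0 * X 1 + 1) + 1) ^ 3
        + 3 * (X 0 * (X 0 * X 1 + 1) + 1) ^ 2 * (X 0 * X 1 + 1)
        - 5 * (X 0 * (X 0 * X 1 + 1) + 1) * (X 0 * X 1 + 1)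
        - (X 0 * X 1 + 1) : MvPolynomial (Fin 2) ℂ) =
      6 * X 1 * (X 0 * (X 0 * X 1 + 1) + 1) ^ 2 * (3 * (X 0 * X 1 + 1) - 1)
        + (X 0 * X 1 + 1) * (2 * (X 0 * X 1 + 1) - 1) * (6 * (X 0 * (X 0 * X 1 + 1) + 1) - 5)
        - 5 * (X 0 * (X 0 * X 1 + 1) + 1) * X 1 - X 1 := by
    simp only [map_sub, map_add, Derivation.leibniz, Derivation.leibniz_pow, pderiv_X,
      pderiv_three, pderiv_five, Derivation.map_one_eq_zero, smul_eq_mul, Pi.single_eq_same,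
      Pi.single_eq_of_ne (by decide : (1:Fin 2) ≠ 0)]
    ring
  have e1 : pderiv (1:Fin 2)
      (3 * X 1 * (X 0 * (X 0 * X 1 + 1) + 1) ^ 3
        + 3 * (X 0 * (X 0 * X 1 + 1) + 1) ^ 2 * (X 0 * X 1 + 1)
        - 5 * (X 0 * (X 0 * X 1 + 1) + 1) * (X 0 * X 1 + 1)
        - (X 0 * X 1 + 1) : MvPolynomial (Fin 2) ℂ) =
      3 * (X 0 * (X 0 * X 1 + 1) + 1) ^ 3
        + X 0 * (9 * (X 0 * (X 0 * X 1 + 1) + 1) ^ 2 * (X 0 * X 1 + 1)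
          - 16 * (X 0 * (X 0 * X 1 + 1) + 1) + 4) := by
    simp only [map_sub, map_add, Derivation.leibniz, Derivation.leibniz_pow, pderiv_X,
      pderiv_three, pderiv_five, Derivation.map_one_eq_zero, smul_eq_mul, Pi.single_eq_same,
      Pi.single_eq_of_ne (by decide : (0:Fin 2) ≠ 1)]
    ring
  have h0 := h 0
  have h1 := h 1
  rw [e0] at h0
  rw [e1] at h1
  simp only [map_add, map_sub, map_mul, map_pow, map_ofNat, map_one, eval_X] at h0 h1
  set a := v 0 with ha
  set b := v 1 with hb
  -- abbreviations (as plain complex numbers): S = a*b+1, P = a*S+1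
  -- key identity: 36 P² (4P−1) = (b1² a)·fx − (Q S)·fy  modulo the hypotheses
  have hP : a * (a * b + 1) + 1 ≠ 0 := by
    intro hc
    have h12 : (12:ℂ) = 0 := by
      linear_combination
        (-(12 * (a*b+1) * (a*(a*b+1)+1)^2 + 3 * (a*b+1) * (a*(a*b+1)+1) + 3 * (a*b+1)
            - 16 * (a*(a*b+1)+1) + 4 - 4)) * h1
        + ((3 * (a*(a*b+1)+1)^2 + 9 * a * (a*(a*b+1)+1) * (a*b+1) - 16 * a)
            * (12 * (a*b+1) * (a*(a*b+1)+1)^2 + 3 * (a*b+1) * (a*(a*b+1)+1) + 3 * (a*b+1)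
              - 16 * (a*(a*b+1)+1) + 4)) * hc
    norm_num at h12
  have h4 : 4 * (a * (a * b + 1) + 1) - 1 ≠ 0 := by
    intro hc
    have h38 : (3:ℂ)/8 = 0 := by
      linear_combination (-1 : ℂ) * h1
        + (3*a^4*b^2 + 6*a^3*b + (9/2)*a^2*b + 3*a^2 + a/2 + 9/8) * hc
    norm_num at h38
  have key : 36 * (a * (a * b + 1) + 1)^2 * (4 * (a * (a * b + 1) + 1) - 1) = 0 := by
    linear_combination
      ((12 * (a*(a*b+1)+1)^3 - 9 * (a*(a*b+1)+1)^2)^2 * a) * h0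
      - ((216 * (a*b+1) * (a*(a*b+1)+1)^5 - 162 * (a*b+1) * (a*(a*b+1)+1)^4
          - 144 * (a*(a*b+1)+1)^5 + 72 * (a*(a*b+1)+1)^4 - 9 * (a*(a*b+1)+1)^3
          - 9 * (a*(a*b+1)+1)^2) * (a*b+1)) * h1
  exact (mul_ne_zero (mul_ne_zero (by norm_num) (pow_ne_zero 2 hP)) h4) key
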